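/- Let F_q be a finite field with q elements, R = F_q[x_1, …, x_n], I ⊆ R an ideal, and I_q = I + (x_1^q − x_1, …, x_n^q − x_n). Let V = {P ∈ F_q^n : f(P) = 0 for all f ∈ I_q}. Then V equals the set of F_q-rational zeros of I, i.e. V = {P ∈ F_q^n : f(P) = 0 for all f ∈ I}, and the evaluation map ev : R/I_q → (V → F_q), sending the class of f to the function P ↦ f(P), is a well-defined F_q-linear bijection; in particular dim_{F_q}(R/I_q) = |V|. -/

import Mathlib

open MvPolynomial

section Aux

universe u
variable {F : Type u} [Field F] [Fintype F] {n : ℕ}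

lemma my_eq_zero (g : MvPolynomial (Fin n) F) (h : ∀ v : Fin n → F, eval v g = 0)
    (hg : g ∈ restrictDegree (Fin n) F (Fintype.card F - 1)) : g = 0 := by
  classical
  let e : ULift.{u} (Fin n) ≃ Fin n := Equiv.ulift
  have hinj : Function.Injective (e.symm : Fin n → ULift.{u} (Fin n)) := e.symm.injective
  have hg' : rename e.symm g = 0 := by
    refine eq_zero_of_eval_eq_zero (ULift.{u} (Fin n)) F _ (fun v => ?_) ?_
    · rw [eval_rename]; exact h _
    · rw [mem_restrictDegree] at hg ⊢
      intro s hs i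
      rw [support_rename_of_injective hinj] at hs
      simp only [Finset.mem_image] at hs
      obtain ⟨d, hd, rfl⟩ := hs
      rw [show i = e.symm (e i) by simp, Finsupp.mapDomain_apply hinj]
      exact hg d hd (e i)
  have := congrArg (rename (e : ULift.{u} (Fin n) → Fin n)) hg'
  rwa [map_zero, rename_rename, e.self_comp_symm, rename_id] at this

lemma eval_span_zero (p : Fin n → F)
    {h : MvPolynomial (Fin n) F}
    (hh : h ∈ Ideal.span ((fun i : Fin n =>
      (X i : MvPolynomial (Fin n) F) ^ Fintype.card F - X i) '' Set.univ)) :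
    eval p h = 0 := by
  have : Ideal.span ((fun i : Fin n =>
      (X i : MvPolynomial (Fin n) F) ^ Fintype.card F - X i) '' Set.univ)
      ≤ RingHom.ker (eval p) := by
    rw [Ideal.span_le]
    rintro _ ⟨i, -, rfl⟩
    simp [RingHom.mem_ker, FiniteField.pow_card]
  exact this hh

lemma mem_span_of_eval_zero (f : MvPolynomial (Fin n) F)
    (hf : ∀ p : Fin n → F, eval p f = 0) :
    f ∈ Ideal.span ((fun i : Fin n =>
      (X i : MvPolynomial (Fin n) F) ^ Fintype.card F - X i) '' Set.univ) := by
  classical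
  set q := Fintype.card F with hq
  set J : Ideal (MvPolynomial (Fin n) F) :=
    Ideal.span ((fun i : Fin n =>
      (X i : MvPolynomial (Fin n) F) ^ q - X i) '' Set.univ) with hJ
  have hq2 : 2 ≤ q := Fintype.one_lt_card
  set π := Ideal.Quotient.mk J with hπ
  have hX : ∀ i : Fin n, π ((X i : MvPolynomial (Fin n) F) ^ q) = π (X i) := by
    intro i
    rw [Ideal.Quotient.mk_eq_mk_iff_sub_mem]
    exact Ideal.subset_span ⟨i, Set.mem_univ i, rfl⟩
  have step1 : ∀ (e : ℕ) (i : Fin n), ∃ e' ≤ q - 1, π ((X i) ^ e) = π ((X i) ^ e') := by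
    intro e
    induction e using Nat.strong_induction_on with
    | _ e ih =>
      intro i
      by_cases he : e ≤ q - 1
      · exact ⟨e, he, rfl⟩
      · have heq : q ≤ e := by omega
        have h1 : (X i : MvPolynomial (Fin n) F) ^ e = X i ^ (e - q) * X i ^ q := by
          rw [← pow_add]; congr 1; omega
        have h2 : π ((X i) ^ e) = π ((X i) ^ (e - q + 1)) := by
          rw [h1, map_mul, hX, pow_add, pow_one, map_mul]
        obtain ⟨e', he', hee'⟩ := ih (e - q + 1) (by omega) i
        exact ⟨e', he', h2.trans hee'⟩
  have step2 : ∀ (d : Fin n →₀ ℕ) (c : F), ∃ g ∈ restrictDegree (Fin n) F (q - 1),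
      π (monomial d c) = π g := by
    intro d c
    choose e' he' hee' using fun i => step1 (d i) i
    refine ⟨monomial (Finsupp.equivFunOnFinite.symm e') c, ?_, ?_⟩
    · rw [mem_restrictDegree]
      intro s hs i
      rw [support_monomial] at hs
      split_ifs at hs with hc
      · simp at hs
      · rw [Finset.mem_singleton] at hs
        subst hs
        simpa using he' i
    · have hm : ∀ (d : Fin n →₀ ℕ) (c : F),
          monomial d c = C c * ∏ i : Fin n, (X i : MvPolynomial (Fin n) F) ^ d i := by
        intro d c
        rw [monomial_eq, Finsupp.prod_fintype]
        intro i
        exact pow_zero _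
      rw [hm, hm, map_mul, map_mul, map_prod, map_prod]
      congr 1
      refine Finset.prod_congr rfl fun i _ => ?_
      exact hee' i
  have step3 : ∃ g ∈ restrictDegree (Fin n) F (q - 1), π f = π g := by
    choose g hg hgπ using fun d : Fin n →₀ ℕ => step2 d (coeff d f)
    refine ⟨∑ d ∈ f.support, g d, Submodule.sum_mem _ fun d _ => hg d, ?_⟩
    conv_lhs => rw [MvPolynomial.as_sum f]
    rw [map_sum, map_sum]
    exact Finset.sum_congr rfl fun d _ => hgπ d
  obtain ⟨g, hg, hfg⟩ := step3
  have hfgJ : f - g ∈ J := (Ideal.Quotient.mk_eq_mk_iff_sub_mem _ _).mp hfg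
  have hgz : g = 0 := by
    refine my_eq_zero g (fun v => ?_) hg
    have h1 := eval_span_zero v hfgJ
    rw [map_sub, hf v, zero_sub, neg_eq_zero] at h1
    exact h1
  rwa [hgz, sub_zero] at hfgJ

end Aux




/-- Let `F_q` be a finite field, `I ⊆ F_q[x_1,…,x_n]` an ideal, and
`I_q = I + (x_1^q − x_1, …, x_n^q − x_n)`.  Then the variety `V` of `I_q` in `F_q^n` equals
the set of `F_q`-rational zeros of `I`, and evaluation gives a well-defined `F_q`-linear
bijection `ev : R/I_q → (V → F_q)`; in particular `dim (R/I_q) = |V|`. -/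
theorem stmt_13 (F : Type*) [Field F] [Fintype F] (q : ℕ) (hq : q = Fintype.card F)
    (n : ℕ) (I : Ideal (MvPolynomial (Fin n) F))
    (Iq : Ideal (MvPolynomial (Fin n) F))
    (hIq : Iq = I + Ideal.span
      ((fun i : Fin n => (MvPolynomial.X i : MvPolynomial (Fin n) F) ^ q - MvPolynomial.X i) ''
        Set.univ))
    (V : Set (Fin n → F))
    (hV : V = {p : Fin n → F | ∀ f ∈ Iq, MvPolynomial.eval p f = 0}) :
    V = {p : Fin n → F | ∀ f ∈ I, MvPolynomial.eval p f = 0} ∧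
    (∃ ev : (MvPolynomial (Fin n) F ⧸ Iq) →ₗ[F] (V → F),
      (∀ f : MvPolynomial (Fin n) F, ∀ p : V,
        ev (Ideal.Quotient.mk Iq f) p = MvPolynomial.eval (p : Fin n → F) f) ∧
      Function.Bijective ev) ∧
    Module.finrank F (MvPolynomial (Fin n) F ⧸ Iq) = Nat.card V := by
  classical
  subst hq
  set J : Ideal (MvPolynomial (Fin n) F) :=
    Ideal.span ((fun i : Fin n =>
      (X i : MvPolynomial (Fin n) F) ^ Fintype.card F - X i) '' Set.univ) with hJ
  have hIle : I ≤ Iq := by rw [hIq]; exact le_sup_left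
  have hJle : J ≤ Iq := by rw [hIq]; exact le_sup_right
  -- Part 1
  have part1 : V = {p : Fin n → F | ∀ f ∈ I, MvPolynomial.eval p f = 0} := by
    ext p
    simp only [hV, Set.mem_setOf_eq]
    constructor
    · exact fun hp f hf => hp f (hIle hf)
    · intro hp f hf
      rw [hIq] at hf
      obtain ⟨a, ha, b, hb, rfl⟩ := Submodule.mem_sup.mp hf
      rw [map_add, hp a ha, eval_span_zero p hb, add_zero]
  -- membership criterion
  have hmem : ∀ f : MvPolynomial (Fin n) F,
      (∀ p : Fin n → F, p ∈ V → eval p f = 0) → f ∈ Iq := by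
    intro f hfV
    have hpick : ∀ p : Fin n → F, p ∉ V → ∃ g ∈ Iq, eval p g ≠ 0 := by
      intro p hp
      by_contra h
      push_neg at h
      exact hp (by rw [hV]; intro g hg; exact h g hg)
    choose gp hgpIq hgp using hpick
    set g' : (Fin n → F) → MvPolynomial (Fin n) F :=
      fun p => if h : p ∉ V then gp p h else 1 with hg'
    have hg'Iq : ∀ p : Fin n → F, p ∉ V → g' p ∈ Iq := by
      intro p hp; simp only [hg', dif_pos hp]; exact hgpIq p hp
    have hg'ne : ∀ p : Fin n → F, p ∉ V → eval p (g' p) ≠ 0 := by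
      intro p hp; simp only [hg', dif_pos hp]; exact hgp p hp
    set T : Finset (Fin n → F) := Finset.univ.filter (fun p => p ∉ V) with hT
    set s : MvPolynomial (Fin n) F :=
      ∑ p ∈ T, C (eval p f * (eval p (g' p))⁻¹) * (indicator p * g' p) with hs
    have hsIq : s ∈ Iq := by
      refine Ideal.sum_mem _ fun p hp => ?_
      have hpV : p ∉ V := (Finset.mem_filter.mp hp).2
      exact Ideal.mul_mem_left _ _ (Ideal.mul_mem_left _ _ (hg'Iq p hpV))
    have hvanish : ∀ r : Fin n → F, eval r (f - s) = 0 := by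
      intro r
      rw [map_sub, hs, map_sum]
      by_cases hr : r ∈ V
      · rw [hfV r hr]
        rw [Finset.sum_eq_zero, sub_zero]
        intro p hp
        have hpV : p ∉ V := (Finset.mem_filter.mp hp).2
        have hpr : r ≠ p := fun h => hpV (h ▸ hr)
        simp only [map_mul, eval_C]
        rw [eval_indicator_apply_eq_zero r p hpr, zero_mul, mul_zero]
      · rw [Finset.sum_eq_single r]
        · simp only [map_mul, eval_C]
          rw [eval_indicator_apply_eq_one, one_mul, mul_assoc,
            inv_mul_cancel₀ (hg'ne r hr), mul_one, sub_self]
        · intro p hp hpr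
          simp only [map_mul, eval_C]
          rw [eval_indicator_apply_eq_zero r p (Ne.symm hpr), zero_mul, mul_zero]
        · intro hrT
          exact absurd (Finset.mem_filter.mpr ⟨Finset.mem_univ r, hr⟩) hrT
    have : f - s ∈ J := mem_span_of_eval_zero _ hvanish
    have : f - s + s ∈ Iq := Ideal.add_mem _ (hJle this) hsIq
    rwa [sub_add_cancel] at this
  -- the evaluation map
  set evA : MvPolynomial (Fin n) F →ₐ[F] (V → F) :=
    Pi.algHom F _ (fun p : V => MvPolynomial.aeval ((p : Fin n → F))) with hevA
  have hevAapp : ∀ (f : MvPolynomial (Fin n) F) (p : V),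
      evA f p = eval (p : Fin n → F) f := by
    intro f p
    rw [show evA f p = aeval ((p : Fin n → F)) f from rfl, ← coe_aeval_eq_eval]
    rfl
  have hker : ∀ a : MvPolynomial (Fin n) F, a ∈ Iq → evA a = 0 := by
    intro a ha
    funext p
    rw [hevAapp]
    exact (hV ▸ p.2 : ∀ g ∈ Iq, eval (p : Fin n → F) g = 0) a ha
  set ev : (MvPolynomial (Fin n) F ⧸ Iq) →ₗ[F] (V → F) :=
    (Ideal.Quotient.liftₐ Iq evA hker).toLinearMap with hev
  have hevapp : ∀ f : MvPolynomial (Fin n) F, ∀ p : V,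
      ev (Ideal.Quotient.mk Iq f) p = eval (p : Fin n → F) f := by
    intro f p
    rw [hev]
    have h1 : Ideal.Quotient.liftₐ Iq evA hker (Ideal.Quotient.mk Iq f) = evA f := by
      rfl
    rw [AlgHom.toLinearMap_apply, h1, hevAapp]
  have hinj : Function.Injective ev := by
    rw [← LinearMap.ker_eq_bot]
    rw [Submodule.eq_bot_iff]
    intro x hx
    obtain ⟨f, rfl⟩ := Ideal.Quotient.mk_surjective x
    have hf : ∀ p : Fin n → F, p ∈ V → eval p f = 0 := by
      intro p hp
      have := congrFun (hx : ev (Ideal.Quotient.mk Iq f) = 0) ⟨p, hp⟩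
      rwa [hevapp] at this
    exact Ideal.Quotient.eq_zero_iff_mem.mpr (hmem f hf)
  have hsurj : Function.Surjective ev := by
    intro φ
    set Φ : (Fin n → F) → F := fun p => if h : p ∈ V then φ ⟨p, h⟩ else 0 with hΦ
    refine ⟨Ideal.Quotient.mk Iq (∑ p : Fin n → F, C (Φ p) * indicator p), ?_⟩
    funext r
    rw [hevapp, map_sum, Finset.sum_eq_single (r : Fin n → F)]
    · rw [map_mul, eval_indicator_apply_eq_one, eval_C, mul_one, hΦ]
      simp [r.2]
    · intro p _ hpr
      rw [map_mul, eval_indicator_apply_eq_zero _ p (Ne.symm hpr), mul_zero]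
    · intro h; exact absurd (Finset.mem_univ _) h
  refine ⟨part1, ⟨ev, hevapp, hinj, hsurj⟩, ?_⟩
  haveI : Fintype V := Fintype.ofFinite _
  have e := LinearEquiv.ofBijective ev ⟨hinj, hsurj⟩
  rw [e.finrank_eq, Module.finrank_fintype_fun_eq_card, Nat.card_eq_fintype_card]
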